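/- arXiv:2009.07014 — 2 statements merged into one kernel-verified Lean document; each statement's English description precedes it below -/
import Mathlib

section
/- Let E be a real Banach lattice and F a real Banach space. The set of almost Dunford–Pettis operators from E to F is a closed linear subspace of the space of all continuous linear operators from E to F with the operator norm: it contains 0, it is closed under addition and scalar multiplication, and if a sequence (u_k) of almost Dunford–Pettis operators converges in operator norm to u, then u is almost Dunford–Pettis. -/
open Filter Topology

/-- A continuous linear operator `u : E → F` from a Banach lattice `E` to a Banach
space `F` is almost Dunford–Pettis if `‖u (x n)‖ → 0` for every weakly null sequence
`(x n)` in `E` whose terms are pairwise disjoint. -/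
def AlmostDunfordPettis {E F : Type*} [NormedAddCommGroup E] [Lattice E] [IsOrderedAddMonoid E] [HasSolidNorm E] [NormedSpace ℝ E]
    [NormedAddCommGroup F] [NormedSpace ℝ F] (u : E →L[ℝ] F) : Prop :=
  ∀ x : ℕ → E,
    (∀ f : E →L[ℝ] ℝ, Tendsto (fun n => f (x n)) atTop (𝓝 0)) →
    (∀ m n, m ≠ n → |x m| ⊓ |x n| = 0) →
    Tendsto (fun n => ‖u (x n)‖) atTop (𝓝 0)

/-- A weakly null sequence is norm bounded (Banach–Steinhaus via the double dual). -/
lemma weakly_null_bounded {E : Type*} [NormedAddCommGroup E] [NormedSpace ℝ E]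
    (x : ℕ → E) (hx : ∀ f : E →L[ℝ] ℝ, Tendsto (fun n => f (x n)) atTop (𝓝 0)) :
    ∃ C, ∀ n, ‖x n‖ ≤ C := by
  have h : ∀ f : StrongDual ℝ E, ∃ C, ∀ n,
      ‖(NormedSpace.inclusionInDoubleDualLi ℝ (x n) : StrongDual ℝ E →L[ℝ] ℝ) f‖ ≤ C := by
    intro f
    have := (hx f).norm.bddAbove_range
    obtain ⟨C, hC⟩ := this
    exact ⟨C, fun n => hC ⟨n, rfl⟩⟩
  obtain ⟨C, hC⟩ := banach_steinhaus h
  refine ⟨C, fun n => ?_⟩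
  have := hC n
  rwa [(NormedSpace.inclusionInDoubleDualLi ℝ).norm_map (x n)] at this

/-- The almost Dunford–Pettis operators from a Banach lattice `E` to a Banach space
`F` form a closed linear subspace of the space of continuous linear operators with
the operator norm: the set contains `0`, is closed under addition and scalar
multiplication, and is closed under limits in the operator norm. -/
theorem almostDunfordPettis_closed_subspace
    (E F : Type*)
    [NormedAddCommGroup E] [Lattice E] [IsOrderedAddMonoid E] [HasSolidNorm E] [NormedSpace ℝ E] [CompleteSpace E]
    [NormedAddCommGroup F] [NormedSpace ℝ F] [CompleteSpace F] :
    AlmostDunfordPettis (0 : E →L[ℝ] F) ∧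
    (∀ u v : E →L[ℝ] F, AlmostDunfordPettis u → AlmostDunfordPettis v →
      AlmostDunfordPettis (u + v)) ∧
    (∀ (a : ℝ) (u : E →L[ℝ] F), AlmostDunfordPettis u →
      AlmostDunfordPettis (a • u)) ∧
    (∀ (u : ℕ → E →L[ℝ] F) (v : E →L[ℝ] F), (∀ k, AlmostDunfordPettis (u k)) →
      Tendsto (fun k => ‖u k - v‖) atTop (𝓝 0) → AlmostDunfordPettis v) := by
  refine ⟨?_, ?_, ?_, ?_⟩
  · intro x _ _
    simpa using tendsto_const_nhds
  · intro u v hu hv x hx hd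
    have h := (hu x hx hd).add (hv x hx hd)
    rw [add_zero] at h
    refine squeeze_zero (fun n => norm_nonneg _) (fun n => ?_) h
    simpa using norm_add_le (u (x n)) (v (x n))
  · intro a u hu x hx hd
    have h := (hu x hx hd).const_mul |a|
    rw [mul_zero] at h
    refine squeeze_zero (fun n => norm_nonneg _) (fun n => ?_) h
    simp [norm_smul, abs_mul]
  · intro u v hu hlim x hx hd
    obtain ⟨C, hC⟩ := weakly_null_bounded x hx
    have hC0 : 0 ≤ C := le_trans (norm_nonneg _) (hC 0)
    rw [NormedAddCommGroup.tendsto_nhds_zero]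
    intro ε hε
    have hC1 : (0:ℝ) < C + 1 := by linarith
    obtain ⟨k, hk⟩ : ∃ k, ‖u k - v‖ < ε / 2 / (C + 1) := by
      have := (NormedAddCommGroup.tendsto_nhds_zero.mp hlim) (ε / 2 / (C + 1))
        (by positivity)
      obtain ⟨k, hk⟩ := this.exists
      exact ⟨k, by simpa using hk⟩
    have h2 := (NormedAddCommGroup.tendsto_nhds_zero.mp (hu k x hx hd)) (ε / 2)
      (by positivity)
    filter_upwards [h2] with n hn
    have h3 : ‖v (x n)‖ ≤ ‖(u k - v) (x n)‖ + ‖u k (x n)‖ := by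
      have : v (x n) = u k (x n) - (u k - v) (x n) := by
        simp [ContinuousLinearMap.sub_apply]
      rw [this]
      simpa [add_comm] using norm_sub_le (u k (x n)) ((u k - v) (x n))
    have h4 : ‖(u k - v) (x n)‖ ≤ ε / 2 / (C + 1) * C := by
      calc ‖(u k - v) (x n)‖ ≤ ‖u k - v‖ * ‖x n‖ := (u k - v).le_opNorm _
        _ ≤ ε / 2 / (C + 1) * C := by
            apply mul_le_mul hk.le (hC n) (norm_nonneg _) (by positivity)
    have h5 : ε / 2 / (C + 1) * C ≤ ε / 2 := by
      rw [div_mul_eq_mul_div, div_le_iff₀ hC1]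
      nlinarith
    have : ‖v (x n)‖ < ε := by
      have hn' : ‖‖u k (x n)‖‖ = ‖u k (x n)‖ := Real.norm_of_nonneg (norm_nonneg _)
      rw [hn'] at hn
      linarith
    simpa [Real.norm_of_nonneg (norm_nonneg (v (x n)))] using this
end

section
/- Let E and F be real Banach lattices and suppose that both dual spaces E* and F* have the positive Schur property. Let (T_n) be a sequence of positive continuous linear operators from E to F* such that the adjoints T_n* : F** → E* converge to 0 in the weak operator topology, i.e. x**(T_n*(y**)) → 0 for every x** ∈ E** and every y** ∈ F**. Then ‖T_n‖ → 0 in operator norm. -/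
open Filter Topology NormedSpace

/-- A continuous linear functional on a Banach lattice is positive if it takes
nonnegative values on the positive cone. -/
def IsPosFunctional {E : Type*} [NormedAddCommGroup E] [Lattice E] [HasSolidNorm E] [IsOrderedAddMonoid E] [NormedSpace ℝ E]
    (f : StrongDual ℝ E) : Prop :=
  ∀ x : E, 0 ≤ x → 0 ≤ f x

/-- The dual `E*` of a Banach lattice `E` has the positive Schur property if every
sequence of positive functionals that is weakly null (tested against all elements
of the bidual `E**`) is norm null. -/
def DualHasPositiveSchurProperty (E : Type*) [NormedAddCommGroup E] [Lattice E] [HasSolidNorm E] [IsOrderedAddMonoid E]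
    [NormedSpace ℝ E] : Prop :=
  ∀ f : ℕ → StrongDual ℝ E, (∀ n, IsPosFunctional (f n)) →
    (∀ Φ : StrongDual ℝ (StrongDual ℝ E), Tendsto (fun n => Φ (f n)) atTop (𝓝 0)) →
    Tendsto (fun n => ‖f n‖) atTop (𝓝 0)

section Ext

variable {X : Type*} [NormedAddCommGroup X] [NormedSpace ℝ X]

lemma myDiff {P : X → Prop} {ρ : X → ℝ}
    (hadd : ∀ a b, P a → P b → ρ (a + b) = ρ a + ρ b)
    {a b c d : X} (ha : P a) (hb : P b) (hc : P c) (hd : P d)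
    (h : a - b = c - d) : ρ a - ρ b = ρ c - ρ d := by
  have h' : a + d = c + b := sub_eq_sub_iff_add_eq_add.mp h
  have h1 := hadd a d ha hd
  have h2 := hadd c b hc hb
  rw [h'] at h1
  linarith

lemma exists_dual_extension (P : X → Prop) (ρ : X → ℝ) {M C : ℝ} (hM : 0 ≤ M)
    (hP0 : P 0) (hPadd : ∀ a b, P a → P b → P (a + b))
    (hadd : ∀ a b, P a → P b → ρ (a + b) = ρ a + ρ b)
    (hnn : ∀ a, P a → 0 ≤ ρ a) (hbd : ∀ a, P a → ρ a ≤ M * ‖a‖)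
    (hdec : ∀ x : X, ∃ a b, P a ∧ P b ∧ x = a - b ∧ ‖a‖ ≤ C * ‖x‖ ∧ ‖b‖ ≤ C * ‖x‖) :
    ∃ L : StrongDual ℝ X, ∀ a, P a → L a = ρ a := by
  have hρ0 : ρ 0 = 0 := by have := hadd 0 0 hP0 hP0; simp at this; linarith
  choose u v hu hv huv hnu hnv using hdec
  set g : X → ℝ := fun x => ρ (u x) - ρ (v x) with hg
  have key : ∀ (x a b : X), P a → P b → x = a - b → g x = ρ a - ρ b := fun x a b ha hb hab =>
    myDiff hadd (hu x) (hv x) ha hb (by rw [← huv x, hab])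
  have gadd : ∀ x y, g (x + y) = g x + g y := by
    intro x y
    have h1 : x + y = (u x + u y) - (v x + v y) := by
      conv_lhs => rw [huv x, huv y]
      abel
    rw [key (x + y) _ _ (hPadd _ _ (hu x) (hu y)) (hPadd _ _ (hv x) (hv y)) h1,
      hadd _ _ (hu x) (hu y), hadd _ _ (hv x) (hv y)]
    simp only [hg]; ring
  have gbd : ∀ x, |g x| ≤ (2 * M * C) * ‖x‖ := by
    intro x
    have b1 := hbd _ (hu x)
    have b2 := hbd _ (hv x)
    have n1 := hnn _ (hu x)
    have n2 := hnn _ (hv x)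
    have c1 : M * ‖u x‖ ≤ M * (C * ‖x‖) := mul_le_mul_of_nonneg_left (hnu x) hM
    have c2 : M * ‖v x‖ ≤ M * (C * ‖x‖) := mul_le_mul_of_nonneg_left (hnv x) hM
    rw [abs_sub_le_iff]
    constructor <;> nlinarith
  set G : X →+ ℝ :=
    { toFun := g
      map_zero' := by
        have := key 0 0 0 hP0 hP0 (by simp)
        simpa [hρ0] using this
      map_add' := gadd } with hG
  have hcont : Continuous G := by
    have hlip : LipschitzWith (Real.toNNReal (2 * M * C)) G := by
      apply LipschitzWith.of_dist_le_mul
      intro x y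
      have hxy : g x - g y = g (x - y) := by
        have := gadd (x - y) y; simp at this; linarith
      calc dist (G x) (G y) = |g x - g y| := rfl
        _ = |g (x - y)| := by rw [hxy]
        _ ≤ (2 * M * C) * ‖x - y‖ := gbd _
        _ ≤ Real.toNNReal (2 * M * C) * dist x y := by
            rw [dist_eq_norm]
            exact mul_le_mul_of_nonneg_right (Real.le_coe_toNNReal _) (norm_nonneg _)
    exact hlip.continuous
  refine ⟨G.toRealLinearMap hcont, fun a ha => ?_⟩
  have : G a = ρ a - ρ 0 := key a a 0 ha hP0 (by simp)
  simpa [hρ0] using this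

end Ext
section Lattice

variable {G : Type*} [NormedAddCommGroup G] [Lattice G] [HasSolidNorm G] [IsOrderedAddMonoid G] [NormedSpace ℝ G]

lemma myNormPosPart (x : G) : ‖x⁺‖ ≤ ‖x‖ := by
  apply HasSolidNorm.solid
  rw [abs_of_nonneg (posPart_nonneg x), ← posPart_add_negPart x]
  exact le_add_of_nonneg_right (negPart_nonneg x)

lemma myNormNegPart (x : G) : ‖x⁻‖ ≤ ‖x‖ := by
  apply HasSolidNorm.solid
  rw [abs_of_nonneg (negPart_nonneg x), ← posPart_add_negPart x]
  exact le_add_of_nonneg_left (posPart_nonneg x)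

lemma IsPosFunctional.zero : IsPosFunctional (0 : StrongDual ℝ G) := fun _ _ => le_rfl

lemma IsPosFunctional.add {f g : StrongDual ℝ G} (hf : IsPosFunctional f) (hg : IsPosFunctional g) :
    IsPosFunctional (f + g) := fun x hx => by
  have := hf x hx; have := hg x hx
  simp only [ContinuousLinearMap.add_apply]; linarith

/-- A positive functional dominated by `f` (in the sense `0 ≤ g ≤ f`) has norm at most `2‖f‖`. -/
lemma isPos_norm_le {f g : StrongDual ℝ G} (hg : IsPosFunctional g)
    (hfg : IsPosFunctional (f - g)) : ‖g‖ ≤ 2 * ‖f‖ := by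
  apply ContinuousLinearMap.opNorm_le_bound _ (by positivity)
  intro x
  have hxp : g x⁺ ≤ f x⁺ := by
    have := hfg x⁺ (posPart_nonneg x); simp only [ContinuousLinearMap.sub_apply] at this; linarith
  have hxn : g x⁻ ≤ f x⁻ := by
    have := hfg x⁻ (negPart_nonneg x); simp only [ContinuousLinearMap.sub_apply] at this; linarith
  have h1 : g x = g x⁺ - g x⁻ := by rw [← map_sub, posPart_sub_negPart]
  have hp0 : 0 ≤ g x⁺ := hg _ (posPart_nonneg x)
  have hn0 : 0 ≤ g x⁻ := hg _ (negPart_nonneg x)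
  have bp : f x⁺ ≤ ‖f‖ * ‖x‖ := by
    calc f x⁺ ≤ |f x⁺| := le_abs_self _
      _ = ‖f x⁺‖ := rfl
      _ ≤ ‖f‖ * ‖x⁺‖ := f.le_opNorm _
      _ ≤ ‖f‖ * ‖x‖ := mul_le_mul_of_nonneg_left (myNormPosPart x) (norm_nonneg f)
  have bn : f x⁻ ≤ ‖f‖ * ‖x‖ := by
    calc f x⁻ ≤ |f x⁻| := le_abs_self _
      _ = ‖f x⁻‖ := rfl
      _ ≤ ‖f‖ * ‖x⁻‖ := f.le_opNorm _
      _ ≤ ‖f‖ * ‖x‖ := mul_le_mul_of_nonneg_left (myNormNegPart x) (norm_nonneg f)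
  have : ‖g x‖ = |g x⁺ - g x⁻| := by rw [h1]; rfl
  rw [this, abs_sub_le_iff]
  constructor <;> linarith

end Lattice
section Decomp

variable {G : Type*} [NormedAddCommGroup G] [Lattice G] [HasSolidNorm G] [IsOrderedAddMonoid G] [NormedSpace ℝ G]

/-- Riesz–Kantorovich: every continuous functional on a Banach lattice is dominated by a
positive functional with controlled norm, such that the difference is also positive. -/
lemma exists_posPart_functional (f : StrongDual ℝ G) :
    ∃ p : StrongDual ℝ G, IsPosFunctional p ∧ IsPosFunctional (p - f) ∧ ‖p‖ ≤ 2 * ‖f‖ := by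
  classical
  set ρ : G → ℝ := fun y => sSup ((fun u => f u) '' {u | 0 ≤ u ∧ u ≤ y}) with hρ
  have hmem0 : ∀ y : G, 0 ≤ y → (0:ℝ) ∈ (fun u => f u) '' {u | 0 ≤ u ∧ u ≤ y} :=
    fun y hy => ⟨0, ⟨le_rfl, hy⟩, by simp⟩
  have hne : ∀ y : G, 0 ≤ y → ((fun u => f u) '' {u | 0 ≤ u ∧ u ≤ y}).Nonempty :=
    fun y hy => ⟨0, hmem0 y hy⟩
  have hval : ∀ (y u : G), 0 ≤ u → u ≤ y → f u ≤ ‖f‖ * ‖y‖ := by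
    intro y u hu0 huy
    have hy : (0:G) ≤ y := hu0.trans huy
    have hnu : ‖u‖ ≤ ‖y‖ := HasSolidNorm.solid (by rwa [abs_of_nonneg hu0, abs_of_nonneg hy])
    calc f u ≤ ‖f u‖ := le_abs_self _
      _ ≤ ‖f‖ * ‖u‖ := f.le_opNorm u
      _ ≤ ‖f‖ * ‖y‖ := mul_le_mul_of_nonneg_left hnu (norm_nonneg f)
  have hbdd : ∀ y : G, 0 ≤ y → BddAbove ((fun u => f u) '' {u | 0 ≤ u ∧ u ≤ y}) := by
    intro y _
    refine ⟨‖f‖ * ‖y‖, ?_⟩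
    rintro r ⟨u, ⟨hu0, huy⟩, rfl⟩
    exact hval y u hu0 huy
  have hnn : ∀ y : G, 0 ≤ y → 0 ≤ ρ y := fun y hy => le_csSup (hbdd y hy) (hmem0 y hy)
  have hbd : ∀ y : G, 0 ≤ y → ρ y ≤ ‖f‖ * ‖y‖ := by
    intro y hy
    apply csSup_le (hne y hy)
    rintro r ⟨u, ⟨hu0, huy⟩, rfl⟩
    exact hval y u hu0 huy
  have hself : ∀ y : G, 0 ≤ y → f y ≤ ρ y := fun y hy =>
    le_csSup (hbdd y hy) ⟨y, ⟨hy, le_rfl⟩, rfl⟩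
  have hadd : ∀ a b : G, 0 ≤ a → 0 ≤ b → ρ (a + b) = ρ a + ρ b := by
    intro a b ha hb
    have hab : (0:G) ≤ a + b := add_nonneg ha hb
    apply le_antisymm
    · apply csSup_le (hne _ hab)
      rintro r ⟨u, ⟨hu0, huab⟩, rfl⟩
      have h1 : (0:G) ≤ u ⊓ a := le_inf hu0 ha
      have h2 : u ⊓ a ≤ a := inf_le_right
      have h3 : (0:G) ≤ u - u ⊓ a := sub_nonneg.mpr inf_le_left
      have h4 : u - u ⊓ a ≤ b := by
        have hub : u - b ≤ u ⊓ a :=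
          le_inf (sub_le_self u hb) (sub_le_iff_le_add.mpr huab)
        exact sub_le_comm.mp hub
      have hsplit : f u = f (u ⊓ a) + f (u - u ⊓ a) := by rw [← map_add]; congr 1; abel
      have m1 : f (u ⊓ a) ≤ ρ a := le_csSup (hbdd a ha) ⟨u ⊓ a, ⟨h1, h2⟩, rfl⟩
      have m2 : f (u - u ⊓ a) ≤ ρ b := le_csSup (hbdd b hb) ⟨u - u ⊓ a, ⟨h3, h4⟩, rfl⟩
      show f u ≤ ρ a + ρ b
      rw [hsplit]; linarith
    · have H : ∀ u1 : G, 0 ≤ u1 → u1 ≤ a → f u1 + ρ b ≤ ρ (a + b) := by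
        intro u1 h1 h2
        have hb2 : ρ b ≤ ρ (a + b) - f u1 := by
          apply csSup_le (hne b hb)
          rintro r ⟨u2, ⟨h3, h4⟩, rfl⟩
          show f u2 ≤ _
          have hm : f (u1 + u2) ≤ ρ (a + b) :=
            le_csSup (hbdd _ hab) ⟨u1 + u2, ⟨add_nonneg h1 h3, add_le_add h2 h4⟩, rfl⟩
          rw [map_add] at hm
          linarith
        linarith
      have ha2 : ρ a ≤ ρ (a + b) - ρ b := by
        apply csSup_le (hne a ha)
        rintro r ⟨u1, ⟨h1, h2⟩, rfl⟩
        show f u1 ≤ _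
        linarith [H u1 h1 h2]
      linarith
  obtain ⟨p, hp⟩ := exists_dual_extension (C := 1) (fun y : G => 0 ≤ y) ρ (norm_nonneg f)
    le_rfl (fun a b ha hb => add_nonneg ha hb) hadd hnn hbd
    (fun x => ⟨x⁺, x⁻, posPart_nonneg x, negPart_nonneg x, (posPart_sub_negPart x).symm,
      by rw [one_mul]; exact myNormPosPart x, by rw [one_mul]; exact myNormNegPart x⟩)
  have hpx : ∀ x : G, p x = ρ x⁺ - ρ x⁻ := by
    intro x
    rw [← hp _ (posPart_nonneg x), ← hp _ (negPart_nonneg x), ← map_sub, posPart_sub_negPart]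
  refine ⟨p, fun y hy => by rw [hp y hy]; exact hnn y hy, fun y hy => ?_, ?_⟩
  · simp only [ContinuousLinearMap.sub_apply]
    rw [hp y hy]
    linarith [hself y hy]
  · apply ContinuousLinearMap.opNorm_le_bound _ (by positivity)
    intro x
    rw [Real.norm_eq_abs, hpx x]
    have n1 := hnn _ (posPart_nonneg x)
    have n2 := hnn _ (negPart_nonneg x)
    have b1 := hbd _ (posPart_nonneg x)
    have b2 := hbd _ (negPart_nonneg x)
    have c1 : ‖f‖ * ‖x⁺‖ ≤ ‖f‖ * ‖x‖ := mul_le_mul_of_nonneg_left (myNormPosPart x) (norm_nonneg f)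
    have c2 : ‖f‖ * ‖x⁻‖ ≤ ‖f‖ * ‖x‖ := mul_le_mul_of_nonneg_left (myNormNegPart x) (norm_nonneg f)
    rw [abs_sub_le_iff]
    constructor <;> linarith

end Decomp
section RieszDecomp

variable {G : Type*} [NormedAddCommGroup G] [Lattice G] [HasSolidNorm G] [IsOrderedAddMonoid G] [NormedSpace ℝ G]

/-- Riesz decomposition property in the dual of a Banach lattice: a positive functional
dominated by a sum of two positive functionals splits accordingly. -/
lemma riesz_decomp_dual {g f1 f2 : StrongDual ℝ G} (hg : IsPosFunctional g)
    (hf1 : IsPosFunctional f1) (hf2 : IsPosFunctional f2)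
    (hle : IsPosFunctional (f1 + f2 - g)) :
    ∃ g1 : StrongDual ℝ G, IsPosFunctional g1 ∧ IsPosFunctional (f1 - g1) ∧
      IsPosFunctional (g - g1) ∧ IsPosFunctional (f2 - (g - g1)) := by
  classical
  set ρ : G → ℝ := fun y => sInf ((fun u => g u + f1 (y - u)) '' {u | 0 ≤ u ∧ u ≤ y}) with hρ
  have hmem : ∀ y : G, 0 ≤ y →
      (g y : ℝ) ∈ (fun u => g u + f1 (y - u)) '' {u | 0 ≤ u ∧ u ≤ y} := by
    intro y hy
    exact ⟨y, ⟨hy, le_rfl⟩, by simp⟩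
  have hne : ∀ y : G, 0 ≤ y → ((fun u => g u + f1 (y - u)) '' {u | 0 ≤ u ∧ u ≤ y}).Nonempty :=
    fun y hy => ⟨g y, hmem y hy⟩
  have hbddB : ∀ y : G, 0 ≤ y → BddBelow ((fun u => g u + f1 (y - u)) '' {u | 0 ≤ u ∧ u ≤ y}) := by
    intro y hy
    refine ⟨0, ?_⟩
    rintro r ⟨u, ⟨hu0, huy⟩, rfl⟩
    have h1 : 0 ≤ g u := hg u hu0
    have h2 : 0 ≤ f1 (y - u) := hf1 _ (sub_nonneg.mpr huy)
    show (0:ℝ) ≤ g u + f1 (y - u)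
    linarith
  have hnn : ∀ y : G, 0 ≤ y → 0 ≤ ρ y := fun y hy => le_csInf (hne y hy) (by
    rintro r ⟨u, ⟨hu0, huy⟩, rfl⟩
    have h1 : 0 ≤ g u := hg u hu0
    have h2 : 0 ≤ f1 (y - u) := hf1 _ (sub_nonneg.mpr huy)
    show (0:ℝ) ≤ g u + f1 (y - u)
    linarith)
  have hleg : ∀ y : G, 0 ≤ y → ρ y ≤ g y := fun y hy => csInf_le (hbddB y hy) (hmem y hy)
  have hlef1 : ∀ y : G, 0 ≤ y → ρ y ≤ f1 y := by
    intro y hy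
    have : (f1 y : ℝ) ∈ (fun u => g u + f1 (y - u)) '' {u | 0 ≤ u ∧ u ≤ y} :=
      ⟨0, ⟨le_rfl, hy⟩, by simp⟩
    exact csInf_le (hbddB y hy) this
  have hlow : ∀ y : G, 0 ≤ y → g y - f2 y ≤ ρ y := by
    intro y hy
    apply le_csInf (hne y hy)
    rintro r ⟨u, ⟨hu0, huy⟩, rfl⟩
    show g y - f2 y ≤ g u + f1 (y - u)
    have h1 : 0 ≤ (f1 + f2 - g) (y - u) := hle _ (sub_nonneg.mpr huy)
    simp only [ContinuousLinearMap.sub_apply, ContinuousLinearMap.add_apply] at h1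
    have h2 : 0 ≤ f2 u := hf2 u hu0
    have h3 : f2 y = f2 (y - u) + f2 u := by rw [← map_add]; congr 1; abel
    have h4 : g y = g (y - u) + g u := by rw [← map_add]; congr 1; abel
    linarith
  have hbd : ∀ y : G, 0 ≤ y → ρ y ≤ ‖g‖ * ‖y‖ := by
    intro y hy
    refine (hleg y hy).trans ?_
    calc g y ≤ ‖g y‖ := le_abs_self _
      _ ≤ ‖g‖ * ‖y‖ := g.le_opNorm y
  have hadd : ∀ a b : G, 0 ≤ a → 0 ≤ b → ρ (a + b) = ρ a + ρ b := by
    intro a b ha hb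
    have hab : (0:G) ≤ a + b := add_nonneg ha hb
    apply le_antisymm
    · -- ρ (a+b) ≤ ρ a + ρ b
      have H : ∀ u1 : G, 0 ≤ u1 → u1 ≤ a → ρ (a + b) ≤ (g u1 + f1 (a - u1)) + ρ b := by
        intro u1 h1 h2
        have : ρ (a + b) - (g u1 + f1 (a - u1)) ≤ ρ b := by
          apply le_csInf (hne b hb)
          rintro r ⟨u2, ⟨h3, h4⟩, rfl⟩
          show _ ≤ g u2 + f1 (b - u2)
          have hm : ρ (a + b) ≤ g (u1 + u2) + f1 ((a + b) - (u1 + u2)) :=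
            csInf_le (hbddB _ hab) ⟨u1 + u2, ⟨add_nonneg h1 h3, add_le_add h2 h4⟩, rfl⟩
          have e1 : g (u1 + u2) = g u1 + g u2 := map_add g u1 u2
          have e2 : f1 ((a + b) - (u1 + u2)) = f1 (a - u1) + f1 (b - u2) := by
            rw [← map_add]; congr 1; abel
          linarith
        linarith
      have : ρ (a + b) - ρ b ≤ ρ a := by
        apply le_csInf (hne a ha)
        rintro r ⟨u1, ⟨h1, h2⟩, rfl⟩
        show _ ≤ g u1 + f1 (a - u1)
        linarith [H u1 h1 h2]
      linarith
    · -- ρ a + ρ b ≤ ρ (a + b)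
      apply le_csInf (hne _ hab)
      rintro r ⟨u, ⟨hu0, huab⟩, rfl⟩
      show ρ a + ρ b ≤ g u + f1 ((a + b) - u)
      have h1 : (0:G) ≤ u ⊓ a := le_inf hu0 ha
      have h2 : u ⊓ a ≤ a := inf_le_right
      have h3 : (0:G) ≤ u - u ⊓ a := sub_nonneg.mpr inf_le_left
      have h4 : u - u ⊓ a ≤ b := by
        have hub : u - b ≤ u ⊓ a :=
          le_inf (sub_le_self u hb) (sub_le_iff_le_add.mpr huab)
        exact sub_le_comm.mp hub
      have m1 : ρ a ≤ g (u ⊓ a) + f1 (a - u ⊓ a) :=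
        csInf_le (hbddB a ha) ⟨u ⊓ a, ⟨h1, h2⟩, rfl⟩
      have m2 : ρ b ≤ g (u - u ⊓ a) + f1 (b - (u - u ⊓ a)) :=
        csInf_le (hbddB b hb) ⟨u - u ⊓ a, ⟨h3, h4⟩, rfl⟩
      have e1 : g u = g (u ⊓ a) + g (u - u ⊓ a) := by rw [← map_add]; congr 1; abel
      have e2 : f1 ((a + b) - u) = f1 (a - u ⊓ a) + f1 (b - (u - u ⊓ a)) := by
        rw [← map_add]; congr 1; abel
      linarith
  obtain ⟨g1, hg1⟩ := exists_dual_extension (C := 1) (fun y : G => 0 ≤ y) ρ (norm_nonneg g)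
    le_rfl (fun a b ha hb => add_nonneg ha hb) hadd hnn hbd
    (fun x => ⟨x⁺, x⁻, posPart_nonneg x, negPart_nonneg x, (posPart_sub_negPart x).symm,
      by rw [one_mul]; exact myNormPosPart x, by rw [one_mul]; exact myNormNegPart x⟩)
  refine ⟨g1, fun y hy => by rw [hg1 y hy]; exact hnn y hy, ?_, ?_, ?_⟩
  · intro y hy
    simp only [ContinuousLinearMap.sub_apply]
    rw [hg1 y hy]
    linarith [hlef1 y hy]
  · intro y hy
    simp only [ContinuousLinearMap.sub_apply]
    rw [hg1 y hy]
    linarith [hleg y hy]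
  · intro y hy
    simp only [ContinuousLinearMap.sub_apply]
    rw [hg1 y hy]
    linarith [hlow y hy]

end RieszDecomp
section Bidual

variable {G : Type*} [NormedAddCommGroup G] [Lattice G] [HasSolidNorm G] [IsOrderedAddMonoid G] [NormedSpace ℝ G]

/-- Every element of the bidual of a Banach lattice is the difference of two functionals
that are nonnegative on the cone of positive functionals. -/
lemma exists_bidual_decomp (Ψ : StrongDual ℝ (StrongDual ℝ G)) :
    ∃ Ψ₁ Ψ₂ : StrongDual ℝ (StrongDual ℝ G),
      (∀ f : StrongDual ℝ G, IsPosFunctional f → 0 ≤ Ψ₁ f) ∧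
      (∀ f : StrongDual ℝ G, IsPosFunctional f → 0 ≤ Ψ₂ f) ∧ Ψ = Ψ₁ - Ψ₂ := by
  classical
  set P : StrongDual ℝ G → Prop := fun f => IsPosFunctional f with hP
  set s : StrongDual ℝ G → ℝ := fun f => sSup ((fun h => Ψ h) '' {h | P h ∧ P (f - h)}) with hs
  have hmem0 : ∀ f, P f → (0:ℝ) ∈ (fun h => Ψ h) '' {h | P h ∧ P (f - h)} := by
    intro f hf
    exact ⟨0, ⟨IsPosFunctional.zero, by simpa using hf⟩, by simp⟩
  have hne : ∀ f, P f → ((fun h => Ψ h) '' {h | P h ∧ P (f - h)}).Nonempty :=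
    fun f hf => ⟨0, hmem0 f hf⟩
  have hbdd : ∀ f, P f → BddAbove ((fun h => Ψ h) '' {h | P h ∧ P (f - h)}) := by
    intro f hf
    refine ⟨‖Ψ‖ * (2 * ‖f‖), ?_⟩
    rintro r ⟨h, ⟨hh, hfh⟩, rfl⟩
    have hn : ‖h‖ ≤ 2 * ‖f‖ := isPos_norm_le hh hfh
    calc Ψ h ≤ ‖Ψ h‖ := le_abs_self _
      _ ≤ ‖Ψ‖ * ‖h‖ := Ψ.le_opNorm h
      _ ≤ ‖Ψ‖ * (2 * ‖f‖) := mul_le_mul_of_nonneg_left hn (norm_nonneg Ψ)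
  have hnn : ∀ f, P f → 0 ≤ s f := fun f hf => le_csSup (hbdd f hf) (hmem0 f hf)
  have hbd : ∀ f, P f → s f ≤ (2 * ‖Ψ‖) * ‖f‖ := by
    intro f hf
    apply csSup_le (hne f hf)
    rintro r ⟨h, ⟨hh, hfh⟩, rfl⟩
    have hn : ‖h‖ ≤ 2 * ‖f‖ := isPos_norm_le hh hfh
    calc Ψ h ≤ ‖Ψ h‖ := le_abs_self _
      _ ≤ ‖Ψ‖ * ‖h‖ := Ψ.le_opNorm h
      _ ≤ ‖Ψ‖ * (2 * ‖f‖) := mul_le_mul_of_nonneg_left hn (norm_nonneg Ψ)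
      _ = (2 * ‖Ψ‖) * ‖f‖ := by ring
  have hself : ∀ f, P f → Ψ f ≤ s f := fun f hf =>
    le_csSup (hbdd f hf) ⟨f, ⟨hf, by simpa using IsPosFunctional.zero⟩, rfl⟩
  have hPadd : ∀ a b : StrongDual ℝ G, P a → P b → P (a + b) := fun a b ha hb =>
    IsPosFunctional.add ha hb
  have hadd : ∀ a b : StrongDual ℝ G, P a → P b → s (a + b) = s a + s b := by
    intro a b ha hb
    have hab : P (a + b) := hPadd a b ha hb
    apply le_antisymm
    · apply csSup_le (hne _ hab)
      rintro r ⟨h, ⟨hh, habh⟩, rfl⟩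
      -- split h = h1 + h2 with h1 ≤ a, h2 ≤ b
      obtain ⟨h1, hh1, hah1, hhh1, hbh1⟩ := riesz_decomp_dual hh ha hb (by
        have : a + b - h = (fun q => q) (a + b - h) := rfl
        simpa using habh)
      have e : Ψ h = Ψ h1 + Ψ (h - h1) := by rw [← map_add]; congr 1; abel
      have m1 : Ψ h1 ≤ s a := le_csSup (hbdd a ha) ⟨h1, ⟨hh1, hah1⟩, rfl⟩
      have m2 : Ψ (h - h1) ≤ s b := le_csSup (hbdd b hb) ⟨h - h1, ⟨hhh1, hbh1⟩, rfl⟩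
      show Ψ h ≤ s a + s b
      rw [e]; linarith
    · have H : ∀ h1 : StrongDual ℝ G, P h1 → P (a - h1) → Ψ h1 + s b ≤ s (a + b) := by
        intro h1 hh1 hah1
        have hb2 : s b ≤ s (a + b) - Ψ h1 := by
          apply csSup_le (hne b hb)
          rintro r ⟨h2, ⟨hh2, hbh2⟩, rfl⟩
          show Ψ h2 ≤ _
          have hm : Ψ (h1 + h2) ≤ s (a + b) := by
            refine le_csSup (hbdd _ hab) ⟨h1 + h2, ⟨hPadd _ _ hh1 hh2, ?_⟩, rfl⟩
            have : a + b - (h1 + h2) = (a - h1) + (b - h2) := by abel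
            rw [this]
            exact IsPosFunctional.add hah1 hbh2
          rw [map_add] at hm
          linarith
        linarith
      have : s a ≤ s (a + b) - s b := by
        apply csSup_le (hne a ha)
        rintro r ⟨h1, ⟨hh1, hah1⟩, rfl⟩
        show Ψ h1 ≤ _
        linarith [H h1 hh1 hah1]
      linarith
  have hdec : ∀ f : StrongDual ℝ G, ∃ p q : StrongDual ℝ G, P p ∧ P q ∧ f = p - q ∧
      ‖p‖ ≤ 3 * ‖f‖ ∧ ‖q‖ ≤ 3 * ‖f‖ := by
    intro f
    obtain ⟨p, hp, hpf, hpn⟩ := exists_posPart_functional f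
    refine ⟨p, p - f, hp, hpf, by abel, by linarith [norm_nonneg f], ?_⟩
    calc ‖p - f‖ ≤ ‖p‖ + ‖f‖ := norm_sub_le p f
      _ ≤ 3 * ‖f‖ := by linarith
  obtain ⟨Ψ₁, hΨ₁⟩ := exists_dual_extension (C := 3) P s (by positivity)
    IsPosFunctional.zero hPadd hadd hnn hbd hdec
  refine ⟨Ψ₁, Ψ₁ - Ψ, ?_, ?_, by abel⟩
  · intro f hf
    rw [hΨ₁ f hf]
    exact hnn f hf
  · intro f hf
    simp only [ContinuousLinearMap.sub_apply]
    rw [hΨ₁ f hf]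
    linarith [hself f hf]

end Bidual

/-- If `E*` and `F*` have the positive Schur property and `(T n)` is a sequence of
positive operators `E → F*` whose adjoints `T n * : F** → E*`,
`(T n * y**) x = y** (T n x)`, converge to `0` in the weak operator topology, then
`‖T n‖ → 0` in the operator norm. -/
theorem opNorm_tendsto_zero_of_dualPSP
    (E F : Type*)
    [NormedAddCommGroup E] [Lattice E] [HasSolidNorm E] [IsOrderedAddMonoid E] [NormedSpace ℝ E] [CompleteSpace E]
    [NormedAddCommGroup F] [Lattice F] [HasSolidNorm F] [IsOrderedAddMonoid F] [NormedSpace ℝ F] [CompleteSpace F]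
    (hE : DualHasPositiveSchurProperty E) (hF : DualHasPositiveSchurProperty F)
    (T : ℕ → E →L[ℝ] StrongDual ℝ F)
    (hTpos : ∀ n (x : E), 0 ≤ x → IsPosFunctional (T n x))
    (hwot : ∀ (Φ : StrongDual ℝ (StrongDual ℝ E)) (Ψ : StrongDual ℝ (StrongDual ℝ F)),
      Tendsto (fun n => Φ (Ψ.comp (T n) : StrongDual ℝ E)) atTop (𝓝 0)) :
    Tendsto (fun n => ‖T n‖) atTop (𝓝 0) := by
  have stepPos : ∀ Ψ : StrongDual ℝ (StrongDual ℝ F), (∀ f : StrongDual ℝ F, IsPosFunctional f → 0 ≤ Ψ f) →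
      Tendsto (fun n => ‖(Ψ.comp (T n) : StrongDual ℝ E)‖) atTop (𝓝 0) := by
    intro Ψ hΨ
    apply hE
    · intro n x hx
      exact hΨ _ (hTpos n x hx)
    · intro Φ
      exact hwot Φ Ψ
  have stepAll : ∀ Ψ : StrongDual ℝ (StrongDual ℝ F),
      Tendsto (fun n => ‖(Ψ.comp (T n) : StrongDual ℝ E)‖) atTop (𝓝 0) := by
    intro Ψ
    obtain ⟨Ψ₁, Ψ₂, h1, h2, hΨ⟩ := exists_bidual_decomp Ψ
    have key : ∀ n, ‖(Ψ.comp (T n) : StrongDual ℝ E)‖ ≤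
        ‖(Ψ₁.comp (T n) : StrongDual ℝ E)‖ + ‖(Ψ₂.comp (T n) : StrongDual ℝ E)‖ := by
      intro n
      have hc : (Ψ.comp (T n) : StrongDual ℝ E) = Ψ₁.comp (T n) - Ψ₂.comp (T n) := by
        ext x
        simp [hΨ]
      rw [hc]
      exact norm_sub_le _ _
    have hsum := (stepPos Ψ₁ h1).add (stepPos Ψ₂ h2)
    rw [add_zero] at hsum
    exact squeeze_zero (fun n => norm_nonneg _) key hsum
  by_contra hcon
  rw [NormedAddCommGroup.tendsto_nhds_zero] at hcon
  push_neg at hcon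
  obtain ⟨ε, hε, hfreq⟩ := hcon
  simp only [not_lt, Real.norm_eq_abs, abs_of_nonneg (norm_nonneg _)] at hfreq
  obtain ⟨φ, hφ, hφε⟩ := Filter.extraction_of_frequently_atTop hfreq
  have hx : ∀ k, ∃ x : E, 0 ≤ x ∧ ‖x‖ ≤ 1 ∧ ε / 4 ≤ ‖T (φ k) x‖ := by
    intro k
    have hTk : ε ≤ ‖T (φ k)‖ := le_of_le_of_eq (hφε k) (abs_of_nonneg (norm_nonneg (T (φ k))))
    have h2 : ¬ (∀ z : E, ‖T (φ k) z‖ ≤ (ε / 2) * ‖z‖) := by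
      intro hall
      have := ContinuousLinearMap.opNorm_le_bound (T (φ k)) (by positivity) hall
      linarith
    push_neg at h2
    obtain ⟨z, hz⟩ := h2
    have hz0 : z ≠ 0 := by
      rintro rfl
      simp only [norm_zero, mul_zero, map_zero] at hz
      exact absurd hz (lt_irrefl 0)
    have hzn : (0:ℝ) < ‖z‖ := norm_pos_iff.mpr hz0
    set w : E := ‖z‖⁻¹ • z with hw
    have hw1 : ‖w‖ ≤ 1 := by
      rw [hw, norm_smul, norm_inv, norm_norm, inv_mul_cancel₀ hzn.ne']
    have hTw : ε / 2 < ‖T (φ k) w‖ := by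
      rw [hw, map_smul, norm_smul, norm_inv, norm_norm, inv_mul_eq_div, lt_div_iff₀ hzn]
      calc ε / 2 * ‖z‖ = ε / 2 * ‖z‖ := rfl
        _ < ‖T (φ k) z‖ := hz
    have hsplit : ‖T (φ k) w‖ ≤ ‖T (φ k) w⁺‖ + ‖T (φ k) w⁻‖ := by
      have hd : T (φ k) w = T (φ k) w⁺ - T (φ k) w⁻ := by
        rw [← map_sub, posPart_sub_negPart]
      rw [hd]
      exact norm_sub_le _ _
    rcases le_or_gt ‖T (φ k) w⁺‖ ‖T (φ k) w⁻‖ with h | h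
    · exact ⟨w⁻, negPart_nonneg w, (myNormNegPart w).trans hw1, by linarith⟩
    · exact ⟨w⁺, posPart_nonneg w, (myNormPosPart w).trans hw1, by linarith⟩
  choose x hx0 hx1 hx2 using hx
  have hnull : Tendsto (fun k => ‖T (φ k) (x k)‖) atTop (𝓝 0) := by
    apply hF
    · intro k
      exact hTpos _ _ (hx0 k)
    · intro Ψ
      have hb : ∀ k, ‖Ψ (T (φ k) (x k))‖ ≤ ‖(Ψ.comp (T (φ k)) : StrongDual ℝ E)‖ := by
        intro k
        calc ‖Ψ (T (φ k) (x k))‖ = ‖(Ψ.comp (T (φ k)) : StrongDual ℝ E) (x k)‖ := rfl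
          _ ≤ ‖(Ψ.comp (T (φ k)) : StrongDual ℝ E)‖ * ‖x k‖ := ContinuousLinearMap.le_opNorm _ _
          _ ≤ ‖(Ψ.comp (T (φ k)) : StrongDual ℝ E)‖ * 1 :=
              mul_le_mul_of_nonneg_left (hx1 k) (norm_nonneg _)
          _ = ‖(Ψ.comp (T (φ k)) : StrongDual ℝ E)‖ := mul_one _
      exact squeeze_zero_norm hb ((stepAll Ψ).comp hφ.tendsto_atTop)
  have hge : ε / 4 ≤ 0 := ge_of_tendsto hnull (Eventually.of_forall fun k => hx2 k)
  linarith
end
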